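/- Let m, n be integers with 1 ≤ m < n/2 and q a prime power, with q → ∞, m constant, and n = o(q^m·(log q)^{−1}). Let X be the random subset of F_q^n in which each point is included independently with probability θ. Then the event that X is an m-blocking set (i.e., X intersects every m-flat of F_q^n) has threshold function n·q^{−m}·log q. -/

import Mathlib

open Filter Asymptotics
set_option linter.unusedSectionVars false
set_option maxHeartbeats 1000000

noncomputable def prRandomSubset {α : Type*} (U : Finset α) (θ : ℝ)
    (E : Finset α → Prop) : ℝ :=
  ∑ A ∈ U.powerset,
    @ite ℝ (E A) (Classical.propDecidable _)
      (θ ^ A.card * (1 - θ) ^ (U.card - A.card)) 0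

section PR
variable {α : Type*} [DecidableEq α] (U : Finset α) (θ : ℝ)

lemma weight_sum : ∑ A ∈ U.powerset, θ ^ A.card * (1 - θ) ^ (U.card - A.card) = 1 := by
  have h := Finset.prod_add (fun _ : α => θ) (fun _ => 1 - θ) U
  simp only [add_sub_cancel, Finset.prod_const, one_pow] at h
  calc ∑ A ∈ U.powerset, θ ^ A.card * (1 - θ) ^ (U.card - A.card)
      = ∑ A ∈ U.powerset, θ ^ A.card * (1 - θ) ^ (U \ A).card := by
        apply Finset.sum_congr rfl
        intro A hA
        rw [Finset.mem_powerset] at hA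
        rw [Finset.card_sdiff_of_subset hA]
    _ = 1 := h.symm

lemma pr_congr {E E' : Finset α → Prop} (h : ∀ A ∈ U.powerset, (E A ↔ E' A)) :
    prRandomSubset U θ E = prRandomSubset U θ E' := by
  unfold prRandomSubset
  apply Finset.sum_congr rfl
  intro A hA
  by_cases hE : E A
  · rw [if_pos hE, if_pos ((h A hA).1 hE)]
  · rw [if_neg hE, if_neg (fun h' => hE ((h A hA).2 h'))]

lemma weight_nonneg (h0 : 0 ≤ θ) (h1 : θ ≤ 1) (A : Finset α) : 0 ≤ θ ^ A.card * (1 - θ) ^ (U.card - A.card) :=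
  mul_nonneg (pow_nonneg h0 _) (pow_nonneg (by linarith) _)

lemma pr_nonneg (h0 : 0 ≤ θ) (h1 : θ ≤ 1) (E : Finset α → Prop) : 0 ≤ prRandomSubset U θ E := by
  apply Finset.sum_nonneg
  intro A _
  split
  · exact weight_nonneg U θ h0 h1 A
  · exact le_refl _

lemma pr_mono (h0 : 0 ≤ θ) (h1 : θ ≤ 1) {E E' : Finset α → Prop} (h : ∀ A, E A → E' A) :
    prRandomSubset U θ E ≤ prRandomSubset U θ E' := by
  apply Finset.sum_le_sum
  intro A _
  by_cases hE : E A
  · rw [if_pos hE, if_pos (h A hE)]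
  · rw [if_neg hE]
    split
    · exact weight_nonneg U θ h0 h1 A
    · exact le_refl _

lemma pr_true : prRandomSubset U θ (fun _ => True) = 1 := by
  unfold prRandomSubset
  simp only [if_pos trivial]
  exact weight_sum U θ

lemma pr_add_compl (E : Finset α → Prop) :
    prRandomSubset U θ E + prRandomSubset U θ (fun A => ¬ E A) = 1 := by
  unfold prRandomSubset
  rw [← Finset.sum_add_distrib]
  conv_rhs => rw [← weight_sum U θ]
  apply Finset.sum_congr rfl
  intro A _
  by_cases hE : E A
  · rw [if_pos hE, if_neg (not_not_intro hE), add_zero]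
  · rw [if_neg hE, if_pos hE, zero_add]

lemma pr_le_one (h0 : 0 ≤ θ) (h1 : θ ≤ 1) (E : Finset α → Prop) : prRandomSubset U θ E ≤ 1 := by
  rw [← pr_add_compl U θ E]
  have := pr_nonneg U θ h0 h1 (fun A => ¬ E A)
  linarith


lemma pr_split (S T : Finset α) (hd : Disjoint S T) (Q₁ Q₂ : Finset α → Prop) :
    prRandomSubset (S ∪ T) θ (fun A => Q₁ (A ∩ S) ∧ Q₂ (A ∩ T)) =
      prRandomSubset S θ Q₁ * prRandomSubset T θ Q₂ := by
  unfold prRandomSubset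
  rw [Finset.sum_mul_sum, ← Finset.sum_product']
  apply Finset.sum_nbij' (i := fun A => (A ∩ S, A ∩ T)) (j := fun p => p.1 ∪ p.2)
  · intro A hA
    simp only [Finset.mem_product, Finset.mem_powerset]
    exact ⟨Finset.inter_subset_right, Finset.inter_subset_right⟩
  · intro p hp
    simp only [Finset.mem_product, Finset.mem_powerset] at hp ⊢
    exact Finset.union_subset_union hp.1 hp.2
  · intro A hA
    rw [Finset.mem_powerset] at hA
    simp only
    rw [← Finset.inter_union_distrib_left, Finset.inter_eq_left.mpr hA]
  · intro p hp
    simp only [Finset.mem_product, Finset.mem_powerset] at hp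
    have e1 : p.2 ∩ S = ∅ := Finset.disjoint_iff_inter_eq_empty.mp
      (Finset.disjoint_left.mpr (fun x hx => Finset.disjoint_right.mp hd (hp.2 hx)))
    have e2 : p.1 ∩ T = ∅ := Finset.disjoint_iff_inter_eq_empty.mp
      (Finset.disjoint_left.mpr (fun x hx => Finset.disjoint_left.mp hd (hp.1 hx)))
    have h1 : (p.1 ∪ p.2) ∩ S = p.1 := by
      rw [Finset.union_inter_distrib_right, Finset.inter_eq_left.mpr hp.1, e1,
        Finset.union_empty]
    have h2 : (p.1 ∪ p.2) ∩ T = p.2 := by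
      rw [Finset.union_inter_distrib_right, Finset.inter_eq_left.mpr hp.2, e2,
        Finset.empty_union]
    simp only [h1, h2]
  · intro A hA
    rw [Finset.mem_powerset] at hA
    simp only
    have hBS : A ∩ S ⊆ S := Finset.inter_subset_right
    have hCT : A ∩ T ⊆ T := Finset.inter_subset_right
    have hA' : A = (A ∩ S) ∪ (A ∩ T) := by
      rw [← Finset.inter_union_distrib_left, Finset.inter_eq_left.mpr hA]
    have hdisj : Disjoint (A ∩ S) (A ∩ T) :=
      hd.mono Finset.inter_subset_right Finset.inter_subset_right
    have hcard : A.card = (A ∩ S).card + (A ∩ T).card := by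
      conv_lhs => rw [hA']
      exact Finset.card_union_of_disjoint hdisj
    have hcardU : (S ∪ T).card = S.card + T.card := Finset.card_union_of_disjoint hd
    have hw : θ ^ A.card * (1 - θ) ^ ((S ∪ T).card - A.card) =
        (θ ^ (A ∩ S).card * (1 - θ) ^ (S.card - (A ∩ S).card)) *
        (θ ^ (A ∩ T).card * (1 - θ) ^ (T.card - (A ∩ T).card)) := by
      rw [hcard, hcardU, pow_add, ← pow_add]
      have e1 : (A ∩ S).card ≤ S.card := Finset.card_le_card hBS
      have e2 : (A ∩ T).card ≤ T.card := Finset.card_le_card hCT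
      have : S.card + T.card - ((A ∩ S).card + (A ∩ T).card) =
          S.card - (A ∩ S).card + (T.card - (A ∩ T).card) := by omega
      rw [this]
      ring
    by_cases hQ1 : Q₁ (A ∩ S)
    · by_cases hQ2 : Q₂ (A ∩ T)
      · rw [if_pos ⟨hQ1, hQ2⟩, if_pos hQ1, if_pos hQ2, hw]
      · rw [if_neg (fun h => hQ2 h.2), if_neg hQ2, mul_zero]
    · rw [if_neg (fun h => hQ1 h.1), if_neg hQ1, zero_mul]

lemma pr_empty : prRandomSubset U θ (fun A => A = ∅) = (1 - θ) ^ U.card := by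
  unfold prRandomSubset
  rw [Finset.sum_eq_single_of_mem ∅ (Finset.empty_mem_powerset U)]
  · rw [if_pos rfl]
    simp
  · intro A _ hne
    rw [if_neg hne]

lemma pr_nonempty : prRandomSubset U θ (fun A => A.Nonempty) = 1 - (1 - θ) ^ U.card := by
  have h := pr_add_compl U θ (fun A => A = ∅)

  rw [pr_empty] at h
  rw [pr_congr U θ (E' := fun A => ¬ (A = ∅))
    (fun A _ => Finset.nonempty_iff_ne_empty)]
  linarith

lemma pr_inter_empty (T : Finset α) (hT : T ⊆ U) :
    prRandomSubset U θ (fun A => A ∩ T = ∅) = (1 - θ) ^ T.card := by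
  calc prRandomSubset U θ (fun A => A ∩ T = ∅)
      = prRandomSubset ((U \ T) ∪ T) θ
        (fun A => (fun _ => True) (A ∩ (U \ T)) ∧ (fun B => B = ∅) (A ∩ T)) := by
        rw [Finset.sdiff_union_of_subset hT]
        exact pr_congr U θ (fun A _ => by simp)
    _ = prRandomSubset (U \ T) θ (fun _ => True) * prRandomSubset T θ (fun B => B = ∅) :=
        pr_split θ (U \ T) T Finset.sdiff_disjoint (fun _ => True) (fun B => B = ∅)
    _ = (1 - θ) ^ T.card := by rw [pr_true, pr_empty, one_mul]

lemma pr_forall_parts {ι : Type*} [DecidableEq ι] (s : Finset ι) (P : ι → Finset α)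
    (hd : (s : Set ι).PairwiseDisjoint P) (Q : ι → Finset α → Prop) :
    prRandomSubset (s.biUnion P) θ (fun A => ∀ j ∈ s, Q j (A ∩ P j)) =
      ∏ j ∈ s, prRandomSubset (P j) θ (Q j) := by
  induction s using Finset.induction_on with
  | empty => simp [prRandomSubset]
  | insert a s' ha ih =>
    have hd' : (s' : Set ι).PairwiseDisjoint P :=
      hd.subset (fun x hx => by simp [hx])
    have hdis : Disjoint (P a) (s'.biUnion P) := by
      rw [Finset.disjoint_biUnion_right]
      intro j hj
      exact hd (by simp) (by simp [hj]) (fun h => ha (h ▸ hj))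
    calc prRandomSubset ((insert a s').biUnion P) θ (fun A => ∀ j ∈ insert a s', Q j (A ∩ P j))
        = prRandomSubset (P a ∪ s'.biUnion P) θ
          (fun A => (fun B => Q a B) (A ∩ P a) ∧
            (fun B => ∀ j ∈ s', Q j (B ∩ P j)) (A ∩ s'.biUnion P)) := by
          rw [Finset.biUnion_insert]
          apply pr_congr
          intro A _
          simp only [Finset.mem_insert, forall_eq_or_imp]
          constructor
          · rintro ⟨h1, h2⟩
            refine ⟨h1, fun j hj => ?_⟩
            rw [Finset.inter_assoc, Finset.inter_eq_right.mpr (Finset.subset_biUnion_of_mem P hj)]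
            exact h2 j hj
          · rintro ⟨h1, h2⟩
            refine ⟨h1, fun j hj => ?_⟩
            have := h2 j hj
            rwa [Finset.inter_assoc,
              Finset.inter_eq_right.mpr (Finset.subset_biUnion_of_mem P hj)] at this
      _ = prRandomSubset (P a) θ (Q a) *
          prRandomSubset (s'.biUnion P) θ (fun B => ∀ j ∈ s', Q j (B ∩ P j)) :=
          pr_split θ (P a) (s'.biUnion P) hdis (fun B => Q a B)
            (fun B => ∀ j ∈ s', Q j (B ∩ P j))
      _ = ∏ j ∈ insert a s', prRandomSubset (P j) θ (Q j) := by
          rw [ih hd', Finset.prod_insert ha]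

lemma pr_exists_le (h0 : 0 ≤ θ) (h1 : θ ≤ 1) {ι : Type*} (s : Finset ι) (Bad : ι → Finset α → Prop) :
    prRandomSubset U θ (fun A => ∃ j ∈ s, Bad j A) ≤
      ∑ j ∈ s, prRandomSubset U θ (Bad j) := by
  unfold prRandomSubset
  rw [Finset.sum_comm]
  apply Finset.sum_le_sum
  intro A _
  by_cases h : ∃ j ∈ s, Bad j A
  · rw [if_pos h]
    obtain ⟨j0, hj0, hb⟩ := h
    calc θ ^ A.card * (1 - θ) ^ (U.card - A.card)
        = @ite ℝ (Bad j0 A) (Classical.propDecidable _)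
            (θ ^ A.card * (1 - θ) ^ (U.card - A.card)) 0 := (if_pos hb).symm
      _ ≤ _ := by
            refine Finset.single_le_sum (f := fun j =>
              @ite ℝ (Bad j A) (Classical.propDecidable _)
                (θ ^ A.card * (1 - θ) ^ (U.card - A.card)) 0) ?_ hj0
            intro j _
            beta_reduce
            by_cases hbj : Bad j A
            · rw [if_pos hbj]
              exact weight_nonneg U θ h0 h1 A
            · rw [if_neg hbj]
  · rw [if_neg h]
    apply Finset.sum_nonneg
    intro j _
    split
    · exact weight_nonneg U θ h0 h1 A
    · exact le_refl 0

end PR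

lemma pr_false {α : Type*} (U : Finset α) (θ : ℝ) :
    prRandomSubset U θ (fun _ => False) = 0 := by
  unfold prRandomSubset
  apply Finset.sum_eq_zero
  intro A _
  rw [if_neg (fun h => h)]

def IsFlat (K : Type*) {V : Type*} [Field K] [AddCommGroup V] [Module K V]
    (m : ℕ) (S : Set V) : Prop :=
  ∃ W : Submodule K V, Module.finrank K W = m ∧ ∃ v : V, S = (v + ·) '' (W : Set V)

section Geom

variable {F : Type*} [Field F] [Fintype F] {n m : ℕ}

lemma card_flat (W : Submodule F (Fin n → F)) (hW : Module.finrank F W = m)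
    (v : Fin n → F) (T : Finset (Fin n → F))
    (hT : ∀ x, x ∈ T ↔ x ∈ (fun y => v + y) '' (W : Set (Fin n → F))) :
    T.card = Fintype.card F ^ m := by
  classical
  have hinj : Function.Injective (fun y : Fin n → F => v + y) := fun a b h => by
    simpa using h
  have hTeq : T = (Finset.univ.filter (fun x => x ∈ W)).image (fun y => v + y) := by
    ext x
    rw [hT]
    simp only [Finset.mem_image, Finset.mem_filter, Finset.mem_univ, true_and,
      Set.mem_image, SetLike.mem_coe]
  rw [hTeq, Finset.card_image_of_injective _ hinj, ← Fintype.card_subtype,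
    Fintype.card_eq_nat_card]
  haveI : Fintype W := Fintype.ofFinite _
  rw [Nat.card_eq_fintype_card, Module.card_eq_pow_finrank (K := F) (V := W), hW]

lemma pr_not_blocking_le (θ : ℝ) (h0 : 0 ≤ θ) (h1 : θ ≤ 1) :
    prRandomSubset (Finset.univ : Finset (Fin n → F)) θ
      (fun A => ¬ (∀ S : Set (Fin n → F), IsFlat F m S → ∃ x ∈ A, x ∈ S)) ≤
      (Fintype.card F : ℝ) ^ (n * (m + 1)) * (1 - θ) ^ (Fintype.card F ^ m) := by
  classical
  set V := Fin n → F
  let spanOf : (Fin m → V) → Submodule F V := fun f => Submodule.span F (Set.range f)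
  let Tflat : (Fin m → V) × V → Finset V := fun j =>
    Finset.univ.filter (fun x => x ∈ (fun y => j.2 + y) '' ((spanOf j.1 : Set V)))
  let Bad : (Fin m → V) × V → Finset V → Prop := fun j A =>
    Module.finrank F (spanOf j.1) = m ∧ A ∩ Tflat j = ∅
  have hstep1 : prRandomSubset (Finset.univ : Finset V) θ
      (fun A => ¬ (∀ S : Set V, IsFlat F m S → ∃ x ∈ A, x ∈ S)) ≤
      prRandomSubset (Finset.univ : Finset V) θ
        (fun A => ∃ j ∈ (Finset.univ : Finset ((Fin m → V) × V)), Bad j A) := by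
    apply pr_mono _ θ h0 h1
    intro A hne
    rw [not_forall] at hne
    obtain ⟨S, hS⟩ := hne
    rw [Classical.not_imp] at hS
    obtain ⟨⟨W, hW, v, rfl⟩, hmiss⟩ := hS
    haveI : FiniteDimensional F W := inferInstance
    let b := Module.finBasis F W
    let f : Fin m → V := fun i => (b (Fin.cast (by rw [hW]) i) : V)
    have hrange : Set.range f = Subtype.val '' Set.range b := by
      ext x
      constructor
      · rintro ⟨i, rfl⟩
        exact ⟨b (Fin.cast (by rw [hW]) i), ⟨_, rfl⟩, rfl⟩
      · rintro ⟨w, ⟨i, rfl⟩, rfl⟩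
        exact ⟨Fin.cast hW i, by simp [f]⟩
    have hspan : spanOf f = W := by
      show Submodule.span F (Set.range f) = W
      rw [hrange]
      have : (Subtype.val '' Set.range b : Set V) = W.subtype '' Set.range b := rfl
      rw [this, Submodule.span_image, b.span_eq, Submodule.map_subtype_top]
    refine ⟨(f, v), Finset.mem_univ _, by rw [show spanOf (f, v).1 = W from hspan, hW], ?_⟩
    rw [Finset.eq_empty_iff_forall_notMem]
    intro x hx
    rw [Finset.mem_inter] at hx
    obtain ⟨hxA, hxT⟩ := hx
    apply hmiss
    refine ⟨x, hxA, ?_⟩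
    have : x ∈ (fun y => (f, v).2 + y) '' ((spanOf (f, v).1 : Set V)) := by
      simpa [Tflat] using hxT
    rwa [show spanOf (f, v).1 = W from hspan] at this
  have hstep3 : ∀ j : (Fin m → V) × V,
      prRandomSubset (Finset.univ : Finset V) θ (Bad j) ≤
        (1 - θ) ^ (Fintype.card F ^ m) := by
    intro j
    by_cases hr : Module.finrank F (spanOf j.1) = m
    · have := pr_inter_empty (Finset.univ : Finset V) θ (Tflat j) (Finset.subset_univ _)
      have hcard : (Tflat j).card = Fintype.card F ^ m :=
        card_flat (spanOf j.1) hr j.2 (Tflat j) (by intro x; simp [Tflat])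
      apply le_of_eq
      calc prRandomSubset (Finset.univ : Finset V) θ (Bad j)
          = prRandomSubset (Finset.univ : Finset V) θ (fun A => A ∩ Tflat j = ∅) :=
            pr_congr _ θ (fun A _ => by simp only [Bad]; tauto)
        _ = (1 - θ) ^ (Tflat j).card := pr_inter_empty _ θ _ (Finset.subset_univ _)
        _ = (1 - θ) ^ (Fintype.card F ^ m) := by rw [hcard]
    · have : prRandomSubset (Finset.univ : Finset V) θ (Bad j) =
          prRandomSubset (Finset.univ : Finset V) θ (fun _ => False) :=
        pr_congr _ θ (fun A _ => by simp only [Bad]; tauto)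
      rw [this, pr_false]
      exact pow_nonneg (by linarith) _
  calc prRandomSubset (Finset.univ : Finset V) θ
        (fun A => ¬ (∀ S : Set V, IsFlat F m S → ∃ x ∈ A, x ∈ S))
      ≤ prRandomSubset (Finset.univ : Finset V) θ
        (fun A => ∃ j ∈ (Finset.univ : Finset ((Fin m → V) × V)), Bad j A) := hstep1
    _ ≤ ∑ j ∈ (Finset.univ : Finset ((Fin m → V) × V)),
          prRandomSubset (Finset.univ : Finset V) θ (Bad j) :=
        pr_exists_le _ θ h0 h1 _ _
    _ ≤ ∑ _j ∈ (Finset.univ : Finset ((Fin m → V) × V)),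
          (1 - θ) ^ (Fintype.card F ^ m) :=
        Finset.sum_le_sum (fun j _ => hstep3 j)
    _ = (Fintype.card ((Fin m → V) × V) : ℝ) * (1 - θ) ^ (Fintype.card F ^ m) := by
        rw [Finset.sum_const, Finset.card_univ, nsmul_eq_mul]
    _ = (Fintype.card F : ℝ) ^ (n * (m + 1)) * (1 - θ) ^ (Fintype.card F ^ m) := by
        congr 1
        rw [Fintype.card_prod, Fintype.card_fun, Fintype.card_fun]
        push_cast
        rw [Fintype.card_fin, Fintype.card_fin]
        rw [← pow_mul, ← pow_add]
        ring_nf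

lemma pr_blocking_le (hmn : m ≤ n) (θ : ℝ) (h0 : 0 ≤ θ) (h1 : θ ≤ 1) :
    prRandomSubset (Finset.univ : Finset (Fin n → F)) θ
      (fun A => ∀ S : Set (Fin n → F), IsFlat F m S → ∃ x ∈ A, x ∈ S) ≤
      (1 - (1 - θ) ^ (Fintype.card F ^ m)) ^ (Fintype.card F ^ (n - m)) := by
  classical
  set V := Fin n → F with hV
  let bV := Pi.basisFun F (Fin n)
  let f : Fin m → V := fun i => bV (Fin.castLE hmn i)
  have hli : LinearIndependent F f :=
    bV.linearIndependent.comp _ (Fin.castLE_injective hmn)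
  set W₀ := Submodule.span F (Set.range f) with hW₀def
  have hW₀ : Module.finrank F W₀ = m := by
    rw [hW₀def, finrank_span_eq_card hli, Fintype.card_fin]
  haveI : Fintype (V ⧸ W₀) := Submodule.Quotient.fintype W₀
  let P : V ⧸ W₀ → Finset V :=
    fun c => Finset.univ.filter (fun x => Submodule.Quotient.mk x = c)
  have hmemP : ∀ (c : V ⧸ W₀) (x : V), x ∈ P c ↔ Submodule.Quotient.mk x = c := by
    intro c x
    simp [P]
  have hPco : ∀ c : V ⧸ W₀, ∃ v : V,
      ∀ x, x ∈ P c ↔ x ∈ (fun y => v + y) '' (W₀ : Set V) := by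
    intro c
    obtain ⟨v, hv⟩ := Submodule.Quotient.mk_surjective W₀ c
    refine ⟨v, fun x => ?_⟩
    rw [hmemP, ← hv, Submodule.Quotient.eq]
    constructor
    · intro h
      refine ⟨x - v, h, ?_⟩
      show v + (x - v) = x
      rw [add_comm]
      exact sub_add_cancel x v
    · rintro ⟨w, hw, rfl⟩
      simpa using hw
  have hPcard : ∀ c : V ⧸ W₀, (P c).card = Fintype.card F ^ m := by
    intro c
    obtain ⟨v, hv⟩ := hPco c
    exact card_flat W₀ hW₀ v (P c) hv
  have hPdisj : ((Finset.univ : Finset (V ⧸ W₀)) : Set (V ⧸ W₀)).PairwiseDisjoint P := by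
    intro c _ c' _ hne
    simp only [Function.onFun]
    rw [Finset.disjoint_left]
    intro x hx hx'
    rw [hmemP] at hx hx'
    exact hne (hx ▸ hx')
  have hunion : (Finset.univ : Finset (V ⧸ W₀)).biUnion P = Finset.univ := by
    ext x
    simp only [Finset.mem_biUnion, Finset.mem_univ, true_and, iff_true]
    exact ⟨Submodule.Quotient.mk x, (hmemP _ x).mpr rfl⟩
  have hQcard : Fintype.card (V ⧸ W₀) = Fintype.card F ^ (n - m) := by
    have hc := Submodule.card_eq_card_quotient_mul_card W₀
    haveI : Fintype W₀ := Fintype.ofFinite _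
    rw [Nat.card_eq_fintype_card, Nat.card_eq_fintype_card, Nat.card_eq_fintype_card] at hc
    rw [Module.card_eq_pow_finrank (K := F) (V := W₀), hW₀] at hc
    have hcV : Fintype.card V = Fintype.card F ^ n := by
      rw [Fintype.card_fun, Fintype.card_fin]
    rw [hcV] at hc
    have hq : 0 < Fintype.card F := Fintype.card_pos
    have hsplit : Fintype.card F ^ n = Fintype.card F ^ m * Fintype.card F ^ (n - m) := by
      rw [← pow_add]
      congr 1
      omega
    rw [hsplit] at hc
    exact Nat.eq_of_mul_eq_mul_left (pow_pos hq m) hc.symm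
  calc prRandomSubset (Finset.univ : Finset V) θ
        (fun A => ∀ S : Set V, IsFlat F m S → ∃ x ∈ A, x ∈ S)
      ≤ prRandomSubset (Finset.univ : Finset V) θ
        (fun A => ∀ c ∈ (Finset.univ : Finset (V ⧸ W₀)),
          (fun B => B.Nonempty) (A ∩ P c)) := by
        apply pr_mono _ θ h0 h1
        intro A hA c _
        obtain ⟨v, hv⟩ := hPco c
        obtain ⟨x, hxA, hxS⟩ := hA ((fun y => v + y) '' (W₀ : Set V)) ⟨W₀, hW₀, v, rfl⟩
        exact ⟨x, Finset.mem_inter.mpr ⟨hxA, (hv x).mpr hxS⟩⟩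
    _ = ∏ c ∈ (Finset.univ : Finset (V ⧸ W₀)),
          prRandomSubset (P c) θ (fun B => B.Nonempty) := by
        rw [← hunion]
        exact pr_forall_parts θ _ P hPdisj (fun _ B => B.Nonempty)
    _ = (1 - (1 - θ) ^ (Fintype.card F ^ m)) ^ (Fintype.card F ^ (n - m)) := by
        rw [Finset.prod_congr rfl (fun c _ => by rw [pr_nonempty, hPcard c])]
        rw [Finset.prod_const, Finset.card_univ, hQcard]
end Geom

section Analytic

variable {F : Type*} [Field F] [Fintype F] {n m : ℕ}

lemma bound0 (hm : 1 ≤ m) (hmn : 2 * m < n) (θ : ℝ) (h0 : 0 ≤ θ) (hhalf : θ ≤ 1/2)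
    (hq2 : (2:ℝ) ≤ (Fintype.card F : ℝ))
    (hsmall : 2 * θ * (Fintype.card F : ℝ) ^ m ≤
      1/4 * ((n : ℝ) * Real.log (Fintype.card F))) :
    prRandomSubset (Finset.univ : Finset (Fin n → F)) θ
      (fun A => ∀ S : Set (Fin n → F), IsFlat F m S → ∃ x ∈ A, x ∈ S) ≤
      Real.exp (-(Real.exp ((1/2) * Real.log (Fintype.card F)))) := by
  classical
  set q : ℝ := (Fintype.card F : ℝ) with hqdef
  have hq0 : (0:ℝ) < q := by linarith
  set L : ℝ := Real.log q with hLdef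
  have hL0 : 0 ≤ L := Real.log_nonneg (by linarith)
  have h1 : θ ≤ 1 := by linarith
  set p : ℝ := (1 - θ) ^ (Fintype.card F ^ m) with hpdef
  have hp0 : 0 ≤ p := pow_nonneg (by linarith) _
  have hp1 : p ≤ 1 := pow_le_one₀ (by linarith) (by linarith)
  set K : ℕ := Fintype.card F ^ (n - m) with hKdef
  -- step A
  have hA := pr_blocking_le (F := F) (m := m) (n := n) (by omega) θ h0 h1
  -- step C
  have hc1 : (1:ℝ) - p ≤ Real.exp (-p) := by
    have := Real.add_one_le_exp (-p); linarith
  have hC : (1 - p) ^ K ≤ Real.exp ((K : ℝ) * (-p)) := by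
    calc (1 - p) ^ K ≤ (Real.exp (-p)) ^ K :=
          pow_le_pow_left₀ (by linarith) hc1 K
      _ = Real.exp ((K : ℝ) * (-p)) := (Real.exp_nat_mul _ K).symm
  -- step D : exp(-(2θ)·q^m) ≤ p
  have hd1 : Real.exp (-(2*θ)) ≤ 1 - θ := by
    have h5 : 1 ≤ (1 - θ) * Real.exp (2*θ) := by
      nlinarith [Real.add_one_le_exp (2*θ), Real.exp_pos (2*θ)]
    have hexp := Real.exp_pos (2*θ)
    calc Real.exp (-(2*θ)) = (Real.exp (2*θ))⁻¹ := Real.exp_neg _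
      _ ≤ 1 - θ := by
          rw [inv_eq_one_div, div_le_iff₀ hexp]
          linarith
  have hD : Real.exp (((Fintype.card F ^ m : ℕ) : ℝ) * (-(2*θ))) ≤ p := by
    calc Real.exp (((Fintype.card F ^ m : ℕ) : ℝ) * (-(2*θ)))
        = (Real.exp (-(2*θ))) ^ (Fintype.card F ^ m) := Real.exp_nat_mul _ _
      _ ≤ (1 - θ) ^ (Fintype.card F ^ m) :=
          pow_le_pow_left₀ (Real.exp_pos _).le hd1 _
  -- K as exp
  have hKexp : (K : ℝ) = Real.exp (((n - m : ℕ) : ℝ) * L) := by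
    rw [hLdef, hKdef]
    push_cast
    rw [Real.exp_nat_mul, Real.exp_log hq0]
  -- step E
  have hE : Real.exp ((1/2) * L) ≤ p * (K : ℝ) := by
    have hcast : ((Fintype.card F ^ m : ℕ) : ℝ) = q ^ m := by push_cast; rfl
    have hpe : Real.exp (q ^ m * (-(2*θ))) ≤ p := by rw [← hcast]; exact hD
    calc Real.exp ((1/2) * L)
        ≤ Real.exp (q ^ m * (-(2*θ)) + ((n - m : ℕ) : ℝ) * L) := by
          apply Real.exp_le_exp.mpr
          have hnm : ((n - m : ℕ) : ℝ) = (n : ℝ) - (m : ℝ) := by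
            rw [Nat.cast_sub (by omega)]
          rw [hnm]
          have hn3 : (3:ℝ) ≤ (n : ℝ) := by exact_mod_cast (by omega : 3 ≤ n)
          have hm2 : 2 * (m:ℝ) + 1 ≤ (n:ℝ) := by exact_mod_cast (by omega : 2 * m + 1 ≤ n)
          nlinarith [hsmall, hL0]
      _ = Real.exp (q ^ m * (-(2*θ))) * Real.exp (((n - m : ℕ) : ℝ) * L) :=
          Real.exp_add _ _
      _ ≤ p * (K : ℝ) := by
          rw [hKexp]
          exact mul_le_mul_of_nonneg_right hpe (Real.exp_pos _).le
  -- combine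
  calc prRandomSubset (Finset.univ : Finset (Fin n → F)) θ
        (fun A => ∀ S : Set (Fin n → F), IsFlat F m S → ∃ x ∈ A, x ∈ S)
      ≤ (1 - p) ^ K := hA
    _ ≤ Real.exp ((K : ℝ) * (-p)) := hC
    _ ≤ Real.exp (-(Real.exp ((1/2) * L))) := by
        apply Real.exp_le_exp.mpr
        have : (K:ℝ) * (-p) = -(p * K) := by ring
        rw [this]
        linarith [hE]

lemma bound1 (hm : 1 ≤ m) (hmn : 2 * m < n) (θ : ℝ) (h0 : 0 ≤ θ) (h1 : θ ≤ 1)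
    (hq2 : (2:ℝ) ≤ (Fintype.card F : ℝ))
    (hbig : ((m:ℝ) + 2) * ((n : ℝ) * Real.log (Fintype.card F)) ≤
      θ * (Fintype.card F : ℝ) ^ m) :
    1 - Real.exp (-(Real.log (Fintype.card F))) ≤
      prRandomSubset (Finset.univ : Finset (Fin n → F)) θ
        (fun A => ∀ S : Set (Fin n → F), IsFlat F m S → ∃ x ∈ A, x ∈ S) := by
  classical
  set q : ℝ := (Fintype.card F : ℝ) with hqdef
  have hq0 : (0:ℝ) < q := by linarith
  set L : ℝ := Real.log q with hLdef
  have hL0 : 0 ≤ L := Real.log_nonneg (by linarith)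
  set E : Finset (Fin n → F) → Prop :=
    fun A => ∀ S : Set (Fin n → F), IsFlat F m S → ∃ x ∈ A, x ∈ S with hEdef
  have hcompl := pr_add_compl (Finset.univ : Finset (Fin n → F)) θ E
  have hub := pr_not_blocking_le (F := F) (n := n) (m := m) θ h0 h1
  -- bound the complement
  have hnb : prRandomSubset (Finset.univ : Finset (Fin n → F)) θ (fun A => ¬ E A) ≤
      Real.exp (-L) := by
    have hq' : (Fintype.card F : ℝ) ^ (n * (m+1)) = Real.exp ((n * (m+1) : ℕ) * L) := by
      rw [Real.exp_nat_mul, Real.exp_log hq0]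
    have hth : (1 - θ) ^ (Fintype.card F ^ m) ≤
        Real.exp (((Fintype.card F ^ m : ℕ) : ℝ) * (-θ)) := by
      calc (1 - θ) ^ (Fintype.card F ^ m) ≤ (Real.exp (-θ)) ^ (Fintype.card F ^ m) :=
            pow_le_pow_left₀ (by linarith)
              (by have := Real.add_one_le_exp (-θ); linarith) _
        _ = Real.exp (((Fintype.card F ^ m : ℕ) : ℝ) * (-θ)) := (Real.exp_nat_mul _ _).symm
    calc prRandomSubset (Finset.univ : Finset (Fin n → F)) θ (fun A => ¬ E A)
        ≤ (Fintype.card F : ℝ) ^ (n * (m + 1)) * (1 - θ) ^ (Fintype.card F ^ m) := hub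
      _ ≤ Real.exp ((n * (m+1) : ℕ) * L) * Real.exp (((Fintype.card F ^ m : ℕ) : ℝ) * (-θ)) := by
          rw [hq']
          exact mul_le_mul_of_nonneg_left hth (Real.exp_pos _).le
      _ = Real.exp ((n * (m+1) : ℕ) * L + ((Fintype.card F ^ m : ℕ) : ℝ) * (-θ)) :=
          (Real.exp_add _ _).symm
      _ ≤ Real.exp (-L) := by
          apply Real.exp_le_exp.mpr
          have hcast1 : ((n * (m+1) : ℕ) : ℝ) = (n:ℝ) * ((m:ℝ) + 1) := by push_cast; ring
          have hcast2 : ((Fintype.card F ^ m : ℕ) : ℝ) = q ^ m := by push_cast; rfl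
          rw [hcast1, hcast2]
          have hn1 : (1:ℝ) ≤ (n:ℝ) := by exact_mod_cast (by omega : 1 ≤ n)
          nlinarith [hbig, hL0]
  linarith [hcompl, hnb]

end Analytic

theorem stmt9 (n q : ℕ → ℕ) (F : ℕ → Type) [∀ i, Field (F i)] [∀ i, Fintype (F i)]
    (m : ℕ) (hm : 1 ≤ m) (hmn : ∀ i, 2 * m < n i)
    (hq : ∀ i, Fintype.card (F i) = q i) (hqpp : ∀ i, IsPrimePow (q i))
    (hqtop : Tendsto q atTop atTop)
    (hno : (fun i => (n i : ℝ)) =o[atTop] fun i => (q i : ℝ) ^ m / Real.log (q i))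
    (θ : ℕ → ℝ) (hθ : ∀ i, 0 ≤ θ i ∧ θ i ≤ 1) :
    (θ =o[atTop] (fun i => (n i : ℝ) * Real.log (q i) / (q i : ℝ) ^ m) →
      Tendsto (fun i => prRandomSubset (Finset.univ : Finset (Fin (n i) → F i)) (θ i)
        (fun A => ∀ S : Set (Fin (n i) → F i), IsFlat (F i) m S →
          ∃ x ∈ A, x ∈ S)) atTop (nhds 0)) ∧
    ((fun i => (n i : ℝ) * Real.log (q i) / (q i : ℝ) ^ m) =o[atTop] θ →
      Tendsto (fun i => prRandomSubset (Finset.univ : Finset (Fin (n i) → F i)) (θ i)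
        (fun A => ∀ S : Set (Fin (n i) → F i), IsFlat (F i) m S →
          ∃ x ∈ A, x ∈ S)) atTop (nhds 1)) := by
  classical
  have hq2ev : ∀ᶠ i in atTop, 2 ≤ q i := hqtop.eventually_ge_atTop 2
  have hqR : Tendsto (fun i => (q i : ℝ)) atTop atTop :=
    tendsto_natCast_atTop_atTop.comp hqtop
  have hlogT : Tendsto (fun i => Real.log (q i)) atTop atTop :=
    Real.tendsto_log_atTop.comp hqR
  constructor
  · intro hθo
    have ev1 : ∀ᶠ i in atTop, ‖θ i‖ ≤
        (1/16) * ‖(n i : ℝ) * Real.log (q i) / (q i : ℝ) ^ m‖ :=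
      hθo.def (by norm_num)
    have ev2 : ∀ᶠ i in atTop, ‖(n i : ℝ)‖ ≤
        1 * ‖(q i : ℝ) ^ m / Real.log (q i)‖ := hno.def one_pos
    have glim : Tendsto (fun i => Real.exp (-(Real.exp ((1/2) * Real.log (q i)))))
        atTop (nhds 0) := by
      have l1 : Tendsto (fun i => (1/2) * Real.log (q i)) atTop atTop :=
        hlogT.const_mul_atTop (by norm_num)
      have l2 : Tendsto (fun i => Real.exp ((1/2) * Real.log (q i))) atTop atTop :=
        Real.tendsto_exp_atTop.comp l1
      have l3 : Tendsto (fun i => -(Real.exp ((1/2) * Real.log (q i)))) atTop atBot :=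
        tendsto_neg_atTop_atBot.comp l2
      exact Real.tendsto_exp_atBot.comp l3
    apply squeeze_zero' ?_ ?_ glim
    · filter_upwards with i
      exact pr_nonneg _ _ (hθ i).1 (hθ i).2 _
    · filter_upwards [hq2ev, ev1, ev2] with i h2 h1e h2e
      have hq1 : (1:ℝ) < (q i : ℝ) := by exact_mod_cast (by omega : 1 < q i)
      have hqm : (0:ℝ) < (q i : ℝ) ^ m := pow_pos (by linarith) m
      have hlq : 0 < Real.log (q i) := Real.log_pos hq1
      have htnn : (0:ℝ) ≤ (n i : ℝ) * Real.log (q i) / (q i : ℝ) ^ m := by positivity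
      rw [Real.norm_eq_abs, Real.norm_eq_abs, abs_of_nonneg (hθ i).1,
        abs_of_nonneg htnn] at h1e
      rw [Real.norm_eq_abs, Real.norm_eq_abs, abs_of_nonneg (by positivity : (0:ℝ) ≤ (n i : ℝ)),
        abs_of_nonneg (by positivity : (0:ℝ) ≤ (q i : ℝ) ^ m / Real.log (q i)),
        one_mul] at h2e
      have ht1 : (n i : ℝ) * Real.log (q i) / (q i : ℝ) ^ m ≤ 1 := by
        rw [div_le_one hqm]
        calc (n i : ℝ) * Real.log (q i)
            ≤ ((q i : ℝ) ^ m / Real.log (q i)) * Real.log (q i) :=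
              mul_le_mul_of_nonneg_right h2e hlq.le
          _ = (q i : ℝ) ^ m := div_mul_cancel₀ _ hlq.ne'
      have hhalf : θ i ≤ 1/2 := by linarith
      have hsmall : 2 * θ i * (q i : ℝ) ^ m ≤
          1/4 * ((n i : ℝ) * Real.log (q i)) := by
        have hstep : θ i * (q i : ℝ) ^ m ≤ (1/16) * ((n i : ℝ) * Real.log (q i)) := by
          calc θ i * (q i : ℝ) ^ m
              ≤ ((1/16) * ((n i : ℝ) * Real.log (q i) / (q i : ℝ) ^ m)) * (q i : ℝ) ^ m :=
                mul_le_mul_of_nonneg_right h1e hqm.le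
            _ = (1/16) * ((n i : ℝ) * Real.log (q i)) := by
                rw [mul_assoc, div_mul_cancel₀ _ hqm.ne']
        nlinarith [htnn, hqm, hlq]
      have hb := bound0 (F := F i) (n := n i) (m := m) hm (hmn i) (θ i) (hθ i).1 hhalf
        (by rw [hq i]; exact_mod_cast h2) (by rw [hq i]; exact hsmall)
      rw [hq i] at hb
      exact hb
  · intro hto
    have ev1 : ∀ᶠ i in atTop, ‖(n i : ℝ) * Real.log (q i) / (q i : ℝ) ^ m‖ ≤
        ((m:ℝ)+2)⁻¹ * ‖θ i‖ := hto.def (by positivity)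
    have glim : Tendsto (fun i => 1 - Real.exp (-(Real.log (q i)))) atTop (nhds 1) := by
      have l3 : Tendsto (fun i => -(Real.log (q i))) atTop atBot :=
        tendsto_neg_atTop_atBot.comp hlogT
      have l4 : Tendsto (fun i => Real.exp (-(Real.log (q i)))) atTop (nhds 0) :=
        Real.tendsto_exp_atBot.comp l3
      simpa using tendsto_const_nhds.sub l4
    apply tendsto_of_tendsto_of_tendsto_of_le_of_le' glim tendsto_const_nhds
    · filter_upwards [hq2ev, ev1] with i h2 h1e
      have hq1 : (1:ℝ) < (q i : ℝ) := by exact_mod_cast (by omega : 1 < q i)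
      have hqm : (0:ℝ) < (q i : ℝ) ^ m := pow_pos (by linarith) m
      have hlq : 0 < Real.log (q i) := Real.log_pos hq1
      have htnn : (0:ℝ) ≤ (n i : ℝ) * Real.log (q i) / (q i : ℝ) ^ m := by positivity
      rw [Real.norm_eq_abs, Real.norm_eq_abs, abs_of_nonneg (hθ i).1,
        abs_of_nonneg htnn] at h1e
      have hmpos : (0:ℝ) < (m:ℝ) + 2 := by positivity
      have hinv : ((m:ℝ)+2) * ((m:ℝ)+2)⁻¹ = 1 := mul_inv_cancel₀ hmpos.ne'
      have hstep : ((m:ℝ)+2) * ((n i : ℝ) * Real.log (q i) / (q i : ℝ) ^ m) ≤ θ i := by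
        calc ((m:ℝ)+2) * ((n i : ℝ) * Real.log (q i) / (q i : ℝ) ^ m)
            ≤ ((m:ℝ)+2) * (((m:ℝ)+2)⁻¹ * θ i) := mul_le_mul_of_nonneg_left h1e hmpos.le
          _ = θ i := by rw [← mul_assoc, hinv, one_mul]
      have hbig : ((m:ℝ)+2) * ((n i : ℝ) * Real.log (q i)) ≤ θ i * (q i : ℝ) ^ m := by
        have hc : ((n i : ℝ) * Real.log (q i) / (q i : ℝ) ^ m) * (q i : ℝ) ^ m =
            (n i : ℝ) * Real.log (q i) := div_mul_cancel₀ _ hqm.ne'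
        calc ((m:ℝ)+2) * ((n i : ℝ) * Real.log (q i))
            = (((m:ℝ)+2) * ((n i : ℝ) * Real.log (q i) / (q i : ℝ) ^ m)) * (q i : ℝ) ^ m := by
              rw [mul_assoc, hc]
          _ ≤ θ i * (q i : ℝ) ^ m := mul_le_mul_of_nonneg_right hstep hqm.le
      have hb := bound1 (F := F i) (n := n i) (m := m) hm (hmn i) (θ i) (hθ i).1 (hθ i).2
        (by rw [hq i]; exact_mod_cast h2) (by rw [hq i]; exact hbig)
      rw [hq i] at hb
      exact hb
    · filter_upwards with i
      exact pr_le_one _ _ (hθ i).1 (hθ i).2 _
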